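/- Let F be a free filter on ℕ generated by a family {X_i : i ∈ I} of subsets of ℕ together with the cofinite sets, and suppose that every family 𝒢 of functions ℕ → ℕ with |𝒢| ≤ |I| is bounded under eventual domination (there is g : ℕ → ℕ with f(n) ≤ g(n) for all but finitely many n, for every f ∈ 𝒢). Then F, identified with a subset of Cantor space 2^ω, is meager. -/
import Mathlib


open MeasureTheory

/-- `F` is a filter of subsets of `ℕ`: it contains `ℕ`, is closed under finite (binary)
intersections and under supersets. -/
def IsSetFilter (F : Set (Set ℕ)) : Prop :=
  Set.univ ∈ F ∧ (∀ X ∈ F, ∀ Y ∈ F, X ∩ Y ∈ F) ∧ (∀ X ∈ F, ∀ Y : Set ℕ, X ⊆ Y → Y ∈ F)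

/-- A free filter: a proper filter containing every cofinite subset of `ℕ`
(so every member of `F` is infinite). -/
def IsFreeFilter (F : Set (Set ℕ)) : Prop :=
  IsSetFilter F ∧ ∅ ∉ F ∧ ∀ X : Set ℕ, Xᶜ.Finite → X ∈ F

open scoped Classical in
/-- The characteristic function of `X ⊆ ℕ`, as a point of Cantor space `2^ω = ℕ → Bool`. -/
noncomputable def chi (X : Set ℕ) : ℕ → Bool := fun n => if n ∈ X then true else false

/-- `μ` is the canonical product probability measure on Cantor space (the infinite product
of uniform measures on `{0,1}`, i.e. Haar measure): every cylinder determined by values on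
a finite set `s` has measure `(1/2)^|s|`. -/
def IsCantorMeasure (μ : Measure (ℕ → Bool)) : Prop :=
  ∀ (s : Finset ℕ) (f : ℕ → Bool),
    μ {x : ℕ → Bool | ∀ i ∈ s, x i = f i} = (1 / 2 : ENNReal) ^ s.card

/-- The set of points of Cantor space hitting every block `[N k, N (k+1))` with `k ≥ K`
is closed and nowhere dense. -/
lemma blocks_isNowhereDense (N : ℕ → ℕ) (hN : StrictMono N) (K : ℕ) :
    IsNowhereDense {x : ℕ → Bool | ∀ k ≥ K, ∃ m, N k ≤ m ∧ m < N (k + 1) ∧ x m = true} := by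
  set C := {x : ℕ → Bool | ∀ k ≥ K, ∃ m, N k ≤ m ∧ m < N (k + 1) ∧ x m = true} with hCdef
  have hclosed : IsClosed C := by
    have hEq : C = ⋂ (k : ℕ) (_ : K ≤ k),
        ⋃ m ∈ Set.Ico (N k) (N (k + 1)), {x : ℕ → Bool | x m = true} := by
      ext x
      simp [hCdef, Set.mem_Ico, and_assoc]
    rw [hEq]
    exact isClosed_iInter fun k => isClosed_iInter fun _ =>
      (Set.finite_Ico _ _).isClosed_biUnion fun m _ =>
        isClosed_eq (continuous_apply m) continuous_const
  rw [hclosed.isNowhereDense_iff, Set.eq_empty_iff_forall_notMem]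
  intro x hx
  rw [mem_interior_iff_mem_nhds, nhds_pi, Filter.mem_pi] at hx
  obtain ⟨Ifin, hIfin, t, ht, hsub⟩ := hx
  have ht' : ∀ i, x i ∈ t i := fun i => mem_of_mem_nhds (ht i)
  obtain ⟨B, hB⟩ := hIfin.bddAbove
  set k := max K (B + 1) with hk
  have hBk : B + 1 ≤ k := le_max_right _ _
  have hkN : k ≤ N k := hN.le_apply
  set y : ℕ → Bool := fun m => if N k ≤ m ∧ m < N (k + 1) then false else x m with hy
  have hymem : y ∈ Ifin.pi t := by
    intro i hi
    have hiB : i ≤ B := hB hi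
    have hik : ¬(N k ≤ i ∧ i < N (k + 1)) := by
      rintro ⟨h1, -⟩
      omega
    have hyx : y i = x i := if_neg hik
    rw [hyx]; exact ht' i
  have hyC : y ∈ C := hsub hymem
  obtain ⟨m, h1, h2, h3⟩ := hyC k (le_max_left _ _)
  simp [hy, h1, h2] at h3

/-- If a free filter `F` is generated by a family `{X_i : i ∈ I}` together with the
cofinite sets, and every family of functions `ℕ → ℕ` of cardinality `≤ |I|` is bounded
under eventual domination, then `F` (as a subset of Cantor space) is meager. -/
theorem small_generated_filter_is_meager
    (I : Type) (X : I → Set ℕ)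
    (F : Set (Set ℕ)) (hF : IsFreeFilter F)
    (hFgen : F = {Y : Set ℕ | ∃ s : Finset I, ∃ Z : Set ℕ, Zᶜ.Finite ∧
      (⋂ i ∈ s, X i) ∩ Z ⊆ Y})
    (hbound : ∀ G : Set (ℕ → ℕ), Cardinal.mk G ≤ Cardinal.mk I →
      ∃ g : ℕ → ℕ, ∀ f ∈ G, ∀ᶠ n in Filter.atTop, f n ≤ g n) :
    IsMeagre (chi '' F) := by
  -- every finite intersection of generators is in `F`
  have hXmem : ∀ s : Finset I, (⋂ i ∈ s, X i) ∈ F := by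
    intro s
    rw [hFgen]
    exact ⟨s, Set.univ, by simp, by simp⟩
  -- every member of `F` is infinite
  have hinf : ∀ A ∈ F, A.Infinite := by
    intro A hA
    by_contra h
    rw [Set.not_infinite] at h
    have hAc : Aᶜ ∈ F := hF.2.2 Aᶜ (by simpa using h)
    have : A ∩ Aᶜ ∈ F := hF.1.2.1 A hA Aᶜ hAc
    rw [Set.inter_compl_self] at this
    exact hF.2.1 this
  -- choose for every finite intersection a "next element" function
  choose f hfmem hflt using fun (s : Finset I) (n : ℕ) => (hinf _ (hXmem s)).exists_gt n
  -- a single function eventually dominating all of them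
  have hgex : ∃ g : ℕ → ℕ, ∀ s : Finset I, ∀ᶠ n in Filter.atTop, f s n ≤ g n := by
    cases finite_or_infinite I with
    | inl h =>
      have : Fintype I := Fintype.ofFinite I
      exact ⟨fun n => Finset.univ.sup fun s : Finset I => f s n,
        fun s => Filter.Eventually.of_forall fun n =>
          Finset.le_sup (f := fun s : Finset I => f s n) (Finset.mem_univ s)⟩
    | inr h =>
      obtain ⟨g, hg⟩ := hbound (Set.range fun s : Finset I => f s)
        (le_of_le_of_eq Cardinal.mk_range_le (Cardinal.mk_finset_of_infinite I))
      exact ⟨g, fun s => hg _ ⟨s, rfl⟩⟩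
  obtain ⟨g, hg⟩ := hgex
  -- the block endpoints
  obtain ⟨N, hN0, hNsucc⟩ : ∃ N : ℕ → ℕ, N 0 = 0 ∧
      ∀ k, N (k + 1) = max (g (N k)) (N k) + 1 :=
    ⟨fun k => Nat.rec 0 (fun _ p => max (g p) p + 1) k, rfl, fun _ => rfl⟩
  have hNmono : StrictMono N := strictMono_nat_of_lt_succ fun k => by
    rw [hNsucc k]; exact Nat.lt_succ_of_le (le_max_right _ _)
  have hgN : ∀ k, g (N k) < N (k + 1) := fun k => by
    rw [hNsucc k]; exact Nat.lt_succ_of_le (le_max_left _ _)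
  -- every member of `F` hits all sufficiently late blocks
  have key : ∀ A ∈ F, ∃ K, ∀ k ≥ K, ∃ m, N k ≤ m ∧ m < N (k + 1) ∧ m ∈ A := by
    intro A hA
    rw [hFgen] at hA
    obtain ⟨s, Z, hZfin, hsubA⟩ := hA
    obtain ⟨Ns, hNs⟩ := Filter.eventually_atTop.mp (hg s)
    obtain ⟨B, hB⟩ := hZfin.bddAbove
    refine ⟨max Ns (B + 1), fun k hk => ?_⟩
    have hkk : k ≤ N k := hNmono.le_apply
    have hk1 : Ns ≤ N k := le_trans (le_trans (le_max_left _ _) hk) hkk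
    have hk2 : B + 1 ≤ N k := le_trans (le_trans (le_max_right _ _) hk) hkk
    refine ⟨f s (N k), le_of_lt (hflt s (N k)),
      lt_of_le_of_lt (hNs _ hk1) (hgN k), ?_⟩
    apply hsubA
    refine ⟨hfmem s (N k), ?_⟩
    by_contra hz
    have h1 : f s (N k) ≤ B := hB hz
    have h2 : N k < f s (N k) := hflt s (N k)
    omega
  -- conclude meagerness
  set C : ℕ → Set (ℕ → Bool) :=
    fun K => {x : ℕ → Bool | ∀ k ≥ K, ∃ m, N k ≤ m ∧ m < N (k + 1) ∧ x m = true} with hC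
  refine isMeagre_iff_countable_union_isNowhereDense.mpr
    ⟨Set.range C, ?_, Set.countable_range C, ?_⟩
  · rintro _ ⟨K, rfl⟩
    exact blocks_isNowhereDense N hNmono K
  · rw [Set.sUnion_range]
    rintro _ ⟨A, hA, rfl⟩
    obtain ⟨K, hK⟩ := key A hA
    refine Set.mem_iUnion.mpr ⟨K, fun k hk => ?_⟩
    obtain ⟨m, h1, h2, h3⟩ := hK k hk
    exact ⟨m, h1, h2, by simp [chi, h3]⟩
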